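/- If G is a finite simple graph with edge reconstruction number at least 3 (equivalently, for every multiset S of at most 2 edge-cards of G there is a blocker of S), then G is 2-swappable. -/

import Mathlib

open SimpleGraph
open scoped Classical

/-- A finite simple graph `G` is 2-swappable if for every edge `e` of `G` there exist a set
`A` of edges of `G` with `e ∈ A` and `|A| ≤ 2`, and a set `B` of edges of the complement of
`G`, such that deleting the edges in `A` and adding the edges in `B` yields a graph
isomorphic to `G`. -/
def TwoSwappable {V : Type} (G : SimpleGraph V) : Prop :=
  ∀ e ∈ G.edgeSet, ∃ A B : Set (Sym2 V),
    e ∈ A ∧ A ⊆ G.edgeSet ∧ A.ncard ≤ 2 ∧ B ⊆ Gᶜ.edgeSet ∧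
    Nonempty ((G.deleteEdges A ⊔ SimpleGraph.fromEdgeSet B) ≃g G)
/-- The edge-deck of `G`: the multiset of edge-deleted subgraphs `G - e` over all edges
`e` of `G` (each regarded up to isomorphism via `DeckContains` below). -/
noncomputable def edgeDeck {V : Type} [Fintype V] (G : SimpleGraph V) :
    Multiset (SimpleGraph V) :=
  G.edgeFinset.val.map fun e => G.deleteEdges {e}

/-- `S` is a sub-multiset of the edge-deck of `H`, up to isomorphism of the cards. -/
def DeckContains {V : Type} [Fintype V] (H : SimpleGraph V)
    (S : Multiset (SimpleGraph V)) : Prop :=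
  ∃ T ≤ edgeDeck H, Multiset.Rel (fun A B => Nonempty (A ≃g B)) S T

/-- The edge reconstruction number of `G` is at least 3: every multiset of at most two
edge-cards of `G` admits a blocker, i.e. a graph `H` not isomorphic to `G` whose edge-deck
contains the given cards. -/
def ErnGeThree {V : Type} [Fintype V] (G : SimpleGraph V) : Prop :=
  ∀ S : Multiset (SimpleGraph V), S ≤ edgeDeck G → S.card ≤ 2 →
    ∃ H : SimpleGraph V, ¬ Nonempty (H ≃g G) ∧ DeckContains H S

section EdgeSwapHelpers

set_option linter.unusedSectionVars false

variable {V : Type}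


/-- `Sym2.map` of an equiv, as an equiv. -/
def sym2Equiv (π : V ≃ V) : Sym2 V ≃ Sym2 V where
  toFun := Sym2.map π
  invFun := Sym2.map π.symm
  left_inv z := by simp [Sym2.map_map, Function.comp_def]
  right_inv z := by simp [Sym2.map_map, Function.comp_def]

lemma sym2Equiv_isDiag (π : V ≃ V) (z : Sym2 V) :
    (sym2Equiv π z).IsDiag ↔ z.IsDiag :=
  Sym2.isDiag_map π.injective

lemma sym2Equiv_mk (π : V ≃ V) (a b : V) :
    sym2Equiv π s(a, b) = s(π a, π b) := rfl

lemma sym2Equiv_symm (π : V ≃ V) : (sym2Equiv π).symm = sym2Equiv π.symm := rfl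

/-- An equiv whose `Sym2` image maps one edge set onto another gives a graph iso. -/
def isoOfMapEdgeSet (G H : SimpleGraph V) (π : V ≃ V)
    (h : sym2Equiv π '' G.edgeSet = H.edgeSet) : G ≃g H where
  toEquiv := π
  map_rel_iff' := by
    intro a b
    have h1 : s(π a, π b) ∈ H.edgeSet ↔ s(a, b) ∈ G.edgeSet := by
      rw [← h, Set.mem_image_equiv]
      constructor
      · intro h2
        have : (sym2Equiv π).symm s(π a, π b) = s(a, b) := by
          rw [sym2Equiv_symm, sym2Equiv_mk]; simp
        rwa [this] at h2
      · intro h2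
        have : (sym2Equiv π).symm s(π a, π b) = s(a, b) := by
          rw [sym2Equiv_symm, sym2Equiv_mk]; simp
        rwa [this]
    simpa [SimpleGraph.mem_edgeSet] using h1

lemma iso_map_edgeSet {G H : SimpleGraph V} (φ : G ≃g H) :
    sym2Equiv φ.toEquiv '' G.edgeSet = H.edgeSet := by
  ext z
  rw [Set.mem_image_equiv, sym2Equiv_symm]
  show Sym2.map _ z ∈ G.edgeSet ↔ _
  exact φ.symm.map_mem_edgeSet_iff

lemma exists_map_of_le_map {α β : Type*} {g : α → β} :
    ∀ {T : Multiset β} {m : Multiset α}, T ≤ m.map g → ∃ m' ≤ m, T = m'.map g := by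
  intro T
  induction T using Multiset.induction with
  | empty => exact fun _ => ⟨0, Multiset.zero_le _, rfl⟩
  | cons a T' ih =>
    intro m h
    have ha : a ∈ m.map g := Multiset.mem_of_le h (Multiset.mem_cons_self _ _)
    obtain ⟨x, hx, rfl⟩ := Multiset.mem_map.1 ha
    have hmap : m.map g = g x ::ₘ (m.erase x).map g := by
      conv_lhs => rw [← Multiset.cons_erase hx]
      rw [Multiset.map_cons]
    rw [hmap] at h
    have hT' : T' ≤ (m.erase x).map g := (Multiset.cons_le_cons_iff _).1 h
    obtain ⟨m'', hm'', rfl⟩ := ih hT'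
    refine ⟨x ::ₘ m'', ?_, by rw [Multiset.map_cons]⟩
    calc x ::ₘ m'' ≤ x ::ₘ m.erase x := Multiset.cons_le_cons _ hm''
    _ = m := Multiset.cons_erase hx

lemma pair_of_map_pair {α β : Type*} {g : α → β} {m' : Multiset α} {b₁ b₂ : β}
    (h : m'.map g = b₁ ::ₘ b₂ ::ₘ 0) (hnd : m'.Nodup) :
    ∃ x y, x ∈ m' ∧ y ∈ m' ∧ x ≠ y ∧
      ((g x = b₁ ∧ g y = b₂) ∨ (g x = b₂ ∧ g y = b₁)) := by
  have hcard : Multiset.card m' = 2 := by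
    have := congrArg Multiset.card h
    simpa using this
  obtain ⟨x, y, rfl⟩ := Multiset.card_eq_two.1 hcard
  have hxy : x ≠ y := by
    intro hxyeq
    subst hxyeq
    simp [Multiset.nodup_cons] at hnd
  have hx : x ∈ ({x, y} : Multiset α) := Multiset.mem_cons_self _ _
  have hy : y ∈ ({x, y} : Multiset α) := by
    simp
  refine ⟨x, y, hx, hy, hxy, ?_⟩
  have h2 : g x ::ₘ g y ::ₘ 0 = b₁ ::ₘ b₂ ::ₘ 0 := by
    simpa using h
  rcases Multiset.cons_eq_cons.1 h2 with ⟨h3, h4⟩ | ⟨hne, cs, h5, h6⟩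
  · left
    refine ⟨h3, ?_⟩
    simpa using h4
  · right
    have hcs : cs = 0 := by
      have := congrArg Multiset.card h5
      simpa using this
    subst hcs
    have h5' : g y = b₁ := by simpa using h5
    have h6' : b₂ = g x := by simpa using h6
    exact ⟨h6'.symm, h5'⟩

lemma sym2Equiv_trans_apply (π ρ : V ≃ V) (z : Sym2 V) :
    sym2Equiv (π.trans ρ) z = sym2Equiv ρ (sym2Equiv π z) := by
  show Sym2.map _ z = Sym2.map _ (Sym2.map _ z)
  rw [Sym2.map_map]
  rfl

variable [Fintype V]

lemma deck_pair_unpack {H : SimpleGraph V} {C₁ C₂ : SimpleGraph V}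
    (T : Multiset (SimpleGraph V)) (hT : T ≤ edgeDeck H)
    (hrel : Multiset.Rel (fun A B => Nonempty (A ≃g B)) (C₁ ::ₘ C₂ ::ₘ 0) T) :
    ∃ f₁ f₂ : Sym2 V, f₁ ∈ H.edgeSet ∧ f₂ ∈ H.edgeSet ∧ f₁ ≠ f₂ ∧
      Nonempty (C₁ ≃g H.deleteEdges {f₁}) ∧ Nonempty (C₂ ≃g H.deleteEdges {f₂}) := by
  rw [Multiset.rel_cons_left] at hrel
  obtain ⟨d₁, T₁, hiso₁, hrel₁, rfl⟩ := hrel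
  rw [Multiset.rel_cons_left] at hrel₁
  obtain ⟨d₂, T₂, hiso₂, hrel₂, rfl⟩ := hrel₁
  rw [Multiset.rel_zero_left] at hrel₂
  subst hrel₂
  obtain ⟨m', hm', hmap⟩ := exists_map_of_le_map hT
  have hnd : m'.Nodup := Multiset.nodup_of_le hm' H.edgeFinset.nodup
  obtain ⟨x, y, hx, hy, hxy, hc⟩ := pair_of_map_pair hmap.symm hnd
  have hxE : x ∈ H.edgeSet := by
    have := Multiset.mem_of_le hm' hx
    rwa [← SimpleGraph.mem_edgeFinset]
  have hyE : y ∈ H.edgeSet := by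
    have := Multiset.mem_of_le hm' hy
    rwa [← SimpleGraph.mem_edgeFinset]
  rcases hc with ⟨h1, h2⟩ | ⟨h1, h2⟩
  · exact ⟨x, y, hxE, hyE, hxy, by rw [h1]; exact hiso₁, by rw [h2]; exact hiso₂⟩
  · exact ⟨y, x, hyE, hxE, hxy.symm, by rw [h2]; exact hiso₁, by rw [h1]; exact hiso₂⟩

lemma deck_single_unpack {H : SimpleGraph V} {C : SimpleGraph V}
    (T : Multiset (SimpleGraph V)) (hT : T ≤ edgeDeck H)
    (hrel : Multiset.Rel (fun A B => Nonempty (A ≃g B)) (C ::ₘ 0) T) :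
    ∃ f : Sym2 V, f ∈ H.edgeSet ∧ Nonempty (C ≃g H.deleteEdges {f}) := by
  rw [Multiset.rel_cons_left] at hrel
  obtain ⟨d, T₁, hiso, hrel₁, rfl⟩ := hrel
  rw [Multiset.rel_zero_left] at hrel₁
  subst hrel₁
  have hd : d ∈ edgeDeck H := Multiset.mem_of_le hT (Multiset.mem_cons_self _ _)
  obtain ⟨f, hf, rfl⟩ := Multiset.mem_map.1 hd
  exact ⟨f, by rwa [← SimpleGraph.mem_edgeFinset], hiso⟩

lemma pullback_blocker {G H : SimpleGraph V} {e f : Sym2 V}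
    (he : e ∈ G.edgeSet) (hf : f ∈ H.edgeSet)
    (φ : G.deleteEdges {e} ≃g H.deleteEdges {f})
    (hni : ¬ Nonempty (H ≃g G)) :
    ∃ π : V ≃ V, (sym2Equiv π).symm f ∉ G.edgeSet ∧
      sym2Equiv π '' (G.edgeSet \ {e}) = H.edgeSet \ {f} := by
  set π := φ.toEquiv with hπ
  have himg : sym2Equiv π '' (G.edgeSet \ {e}) = H.edgeSet \ {f} := by
    have h := iso_map_edgeSet φ
    rwa [SimpleGraph.edgeSet_deleteEdges, SimpleGraph.edgeSet_deleteEdges] at h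
  refine ⟨π, ?_, himg⟩
  · intro hb
    have happ : sym2Equiv π ((sym2Equiv π).symm f) = f := (sym2Equiv π).apply_symm_apply f
    by_cases hbe : (sym2Equiv π).symm f = e
    · -- full edge set maps over, giving iso G ≃g H, contradiction
      have hfull : sym2Equiv π '' G.edgeSet = H.edgeSet := by
        have hE : G.edgeSet = insert e (G.edgeSet \ {e}) := by
          rw [Set.insert_diff_singleton, Set.insert_eq_self.2 he]
        have hEH : H.edgeSet = insert f (H.edgeSet \ {f}) := by
          rw [Set.insert_diff_singleton, Set.insert_eq_self.2 hf]
        rw [hE, Set.image_insert_eq, himg, ← hbe, happ, ← hEH]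
      exact hni ⟨(isoOfMapEdgeSet G H _ hfull).symm⟩
    · have : (sym2Equiv π).symm f ∈ G.edgeSet \ {e} := ⟨hb, hbe⟩
      have : f ∈ H.edgeSet \ {f} := by
        rw [← himg]
        exact ⟨_, this, happ⟩
      exact this.2 rfl

lemma compl_mem_of_not_edge {G : SimpleGraph V} {z : Sym2 V}
    (hnd : ¬z.IsDiag) (hz : z ∉ G.edgeSet) : z ∈ Gᶜ.edgeSet := by
  induction z using Sym2.inductionOn with
  | hf a b =>
    rw [SimpleGraph.mem_edgeSet, SimpleGraph.compl_adj]
    exact ⟨fun hab => hnd (by simp [hab]), fun hadj => hz hadj⟩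

lemma swap_builder {G : SimpleGraph V} {e β : Sym2 V} {D : Set (Sym2 V)}
    (he : e ∈ G.edgeSet) (hnd : ∀ z ∈ D, ¬z.IsDiag) (heD : e ∉ D)
    (hsub : G.edgeSet \ D ⊆ {e, β})
    (hiso : Nonempty (SimpleGraph.fromEdgeSet D ≃g G)) :
    ∃ A B : Set (Sym2 V),
      e ∈ A ∧ A ⊆ G.edgeSet ∧ A.ncard ≤ 2 ∧ B ⊆ Gᶜ.edgeSet ∧
      Nonempty ((G.deleteEdges A ⊔ SimpleGraph.fromEdgeSet B) ≃g G) := by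
  refine ⟨G.edgeSet \ D, D \ G.edgeSet, ⟨he, heD⟩, Set.diff_subset, ?_, ?_, ?_⟩
  · calc (G.edgeSet \ D).ncard ≤ ({e, β} : Set (Sym2 V)).ncard :=
          Set.ncard_le_ncard hsub ((Set.finite_singleton β).insert e)
    _ ≤ ({β} : Set (Sym2 V)).ncard + 1 := Set.ncard_insert_le _ _
    _ ≤ 2 := by rw [Set.ncard_singleton]
  · intro z hz
    exact compl_mem_of_not_edge (hnd z hz.1) hz.2
  · have hgr : G.deleteEdges (G.edgeSet \ D) ⊔ SimpleGraph.fromEdgeSet (D \ G.edgeSet)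
        = SimpleGraph.fromEdgeSet D := by
      ext a b
      simp only [SimpleGraph.sup_adj, SimpleGraph.deleteEdges_adj,
        SimpleGraph.fromEdgeSet_adj, Set.mem_diff]
      constructor
      · rintro (⟨hadj, hno⟩ | ⟨⟨hD, _⟩, hne⟩)
        · refine ⟨?_, hadj.ne⟩
          by_contra hc
          exact hno ⟨hadj, hc⟩
        · exact ⟨hD, hne⟩
      · rintro ⟨hD, hne⟩
        by_cases hE : s(a, b) ∈ G.edgeSet
        · exact Or.inl ⟨hE, fun hc => hc.2 hD⟩
        · exact Or.inr ⟨⟨hD, hE⟩, hne⟩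
    rw [hgr]
    exact hiso

lemma pair_step {G : SimpleGraph V} (h : ErnGeThree G) {e x : Sym2 V}
    (he : e ∈ G.edgeSet) (hx : x ∈ G.edgeSet) (hxe : x ≠ e) :
    (∃ A B : Set (Sym2 V),
      e ∈ A ∧ A ⊆ G.edgeSet ∧ A.ncard ≤ 2 ∧ B ⊆ Gᶜ.edgeSet ∧
      Nonempty ((G.deleteEdges A ⊔ SimpleGraph.fromEdgeSet B) ≃g G)) ∨
    (∃ (Ψ : V ≃ V) (β b : Sym2 V),
      sym2Equiv Ψ '' G.edgeSet = insert b (G.edgeSet \ {β}) ∧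
      sym2Equiv Ψ x = e ∧ β ∈ G.edgeSet ∧ β ≠ e ∧ b ∉ G.edgeSet ∧ ¬b.IsDiag) := by
  classical
  -- apply the hypothesis to the two-card multiset
  have hS : (G.deleteEdges {x} ::ₘ G.deleteEdges {e} ::ₘ 0) ≤ edgeDeck G := by
    have hle : (x ::ₘ e ::ₘ 0 : Multiset (Sym2 V)) ≤ G.edgeFinset.val := by
      rw [Multiset.le_iff_subset]
      · intro z hz
        rcases Multiset.mem_cons.1 hz with rfl | hz
        · exact Finset.mem_def.1 (SimpleGraph.mem_edgeFinset.2 hx)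
        · rcases Multiset.mem_cons.1 hz with rfl | hz
          · exact Finset.mem_def.1 (SimpleGraph.mem_edgeFinset.2 he)
          · simp at hz
      · exact Multiset.nodup_cons.2 ⟨by simp [hxe], by simp⟩
    have := Multiset.map_le_map (f := fun z => G.deleteEdges {z}) hle
    simpa [edgeDeck] using this
  obtain ⟨H, hni, T, hT, hrel⟩ := h _ hS (by simp)
  obtain ⟨f₁, f₂, hf₁, hf₂, hff, ⟨φ₁⟩, ⟨φ₂⟩⟩ := deck_pair_unpack T hT hrel
  obtain ⟨π₁, hb₁, himg₁⟩ := pullback_blocker hx hf₁ φ₁ hni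
  obtain ⟨π₂, hb₂, himg₂⟩ := pullback_blocker he hf₂ φ₂ hni
  set P₁ := sym2Equiv π₁ with hP₁
  set P₂ := sym2Equiv π₂ with hP₂
  set b₁' := P₁.symm f₁ with hb₁'def
  set b := P₂.symm f₂ with hbdef
  have hbnd : ¬b.IsDiag := by
    rw [hbdef, sym2Equiv_symm, sym2Equiv_isDiag]
    exact H.not_isDiag_of_mem_edgeSet hf₂
  set Ψv := π₁.trans π₂.symm with hΨv
  set σ := sym2Equiv Ψv with hσ
  have hσapp : ∀ z, σ z = P₂.symm (P₁ z) := by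
    intro z
    rw [hσ, hΨv, sym2Equiv_trans_apply, ← sym2Equiv_symm]
  have hσimg : ∀ S : Set (Sym2 V), σ '' S = P₂.symm '' (P₁ '' S) := by
    intro S
    ext z
    simp only [Set.mem_image, exists_exists_and_eq_and, hσapp]
  have KEY1 : P₁ '' (insert b₁' (G.edgeSet \ {x})) = H.edgeSet := by
    rw [Set.image_insert_eq, himg₁, show P₁ b₁' = f₁ from P₁.apply_symm_apply f₁,
      Set.insert_diff_singleton, Set.insert_eq_self.2 hf₁]
  have KEY2 : P₂ '' (insert b (G.edgeSet \ {e})) = H.edgeSet := by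
    rw [Set.image_insert_eq, himg₂, show P₂ b = f₂ from P₂.apply_symm_apply f₂,
      Set.insert_diff_singleton, Set.insert_eq_self.2 hf₂]
  have KEY : σ '' (insert b₁' (G.edgeSet \ {x})) = insert b (G.edgeSet \ {e}) := by
    rw [hσimg, KEY1, ← KEY2, Equiv.symm_image_image]
  set β := σ b₁' with hβdef
  have hβf : β = P₂.symm f₁ := by
    rw [hβdef, hσapp, hb₁'def, P₁.apply_symm_apply]
  have hβb : β ≠ b := by
    rw [hβf, hbdef]
    exact fun hc => hff (P₂.symm.injective hc)
  have hβmem : β ∈ insert b (G.edgeSet \ {e}) := by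
    rw [← KEY]
    exact Set.mem_image_of_mem σ (Set.mem_insert _ _)
  have hβE : β ∈ G.edgeSet := by
    rcases hβmem with hc | hc
    · exact absurd hc hβb
    · exact hc.1
  have hβe : β ≠ e := by
    rcases hβmem with hc | hc
    · exact absurd hc hβb
    · exact hc.2
  have himgE : σ '' G.edgeSet = insert (σ x) ((insert b (G.edgeSet \ {e})) \ {β}) := by
    have hEx : G.edgeSet = insert x (G.edgeSet \ {x}) := by
      rw [Set.insert_diff_singleton, Set.insert_eq_self.2 hx]
    have hdx : G.edgeSet \ {x} = (insert b₁' (G.edgeSet \ {x})) \ {b₁'} := by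
      rw [Set.insert_diff_self_of_notMem]
      exact fun hc => hb₁ hc.1
    conv_lhs => rw [hEx, Set.image_insert_eq, hdx, Set.image_diff σ.injective,
      Set.image_singleton, KEY]
  by_cases hεe : σ x = e
  · -- degenerate case: record the one-swap structure
    right
    refine ⟨Ψv, β, b, ?_, hεe, hβE, hβe, hb₂, hbnd⟩
    rw [himgE, hεe]
    ext z
    simp only [Set.mem_insert_iff, Set.mem_diff, Set.mem_singleton_iff]
    constructor
    · rintro (rfl | ⟨rfl | ⟨hzE, hze⟩, hzβ⟩)
      · exact Or.inr ⟨he, Ne.symm hβe⟩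
      · exact Or.inl rfl
      · exact Or.inr ⟨hzE, hzβ⟩
    · rintro (rfl | ⟨hzE, hzβ⟩)
      · exact Or.inr ⟨Or.inl rfl, Ne.symm hβb⟩
      · by_cases hze : z = e
        · exact Or.inl hze
        · exact Or.inr ⟨Or.inr ⟨hzE, hze⟩, hzβ⟩
  · -- good case: we directly obtain a 2-swap at e
    left
    have hnd : ∀ z ∈ σ '' G.edgeSet, ¬z.IsDiag := by
      rintro z ⟨w, hw, rfl⟩
      rw [hσ, sym2Equiv_isDiag]
      exact G.not_isDiag_of_mem_edgeSet hw
    have heD : e ∉ σ '' G.edgeSet := by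
      rw [himgE]
      rintro (hc | ⟨hc | hc, -⟩)
      · exact hεe hc.symm
      · exact hb₂ (hc ▸ he)
      · exact hc.2 rfl
    have hsub : G.edgeSet \ (σ '' G.edgeSet) ⊆ {e, β} := by
      rintro z ⟨hzE, hzD⟩
      by_contra hc
      simp only [Set.mem_insert_iff, Set.mem_singleton_iff, not_or] at hc
      refine hzD ?_
      rw [himgE]
      exact Or.inr ⟨Or.inr ⟨hzE, hc.1⟩, hc.2⟩
    have hiso : Nonempty (SimpleGraph.fromEdgeSet (σ '' G.edgeSet) ≃g G) := by
      refine ⟨(isoOfMapEdgeSet G _ Ψv ?_).symm⟩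
      rw [SimpleGraph.edgeSet_fromEdgeSet, ← hσ]
      ext z
      simp only [Set.mem_diff, Set.mem_setOf_eq]
      exact ⟨fun hz => ⟨hz, hnd z hz⟩, fun hz => hz.1⟩
    exact swap_builder he hnd heD hsub hiso

lemma exists_equiv_sym2 [DecidableEq V] (f e : Sym2 V) (hf : ¬f.IsDiag) (he : ¬e.IsDiag) :
    ∃ π : V ≃ V, sym2Equiv π f = e := by
  induction f using Sym2.inductionOn with
  | hf a₁ a₂ =>
    induction e using Sym2.inductionOn with
    | hf c₁ c₂ =>
      have ha : a₁ ≠ a₂ := fun hc => hf (Sym2.mk_isDiag_iff.2 hc)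
      have hc : c₁ ≠ c₂ := fun hc' => he (Sym2.mk_isDiag_iff.2 hc')
      set π₁ := Equiv.swap a₁ c₁ with hπ₁
      set π₂ := Equiv.swap (π₁ a₂) c₂ with hπ₂
      refine ⟨π₁.trans π₂, ?_⟩
      rw [sym2Equiv_mk]
      have h1 : π₂ (π₁ a₁) = c₁ := by
        rw [hπ₁, Equiv.swap_apply_left]
        refine Equiv.swap_apply_of_ne_of_ne ?_ hc
        intro hcontra
        have h3 : a₂ = π₁.symm c₁ := (Equiv.eq_symm_apply π₁).2 hcontra.symm
        rw [hπ₁, Equiv.symm_swap, Equiv.swap_apply_right] at h3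
        exact ha h3.symm
      have h2 : π₂ (π₁ a₂) = c₂ := Equiv.swap_apply_left _ _
      simp only [Equiv.trans_apply, h1, h2]


end EdgeSwapHelpers

/-- If `G` is a finite simple graph with edge reconstruction number at least 3, then `G`
is 2-swappable. -/
theorem stmt_0 {V : Type} [Fintype V] [DecidableEq V] (G : SimpleGraph V)
    (h : ErnGeThree G) : TwoSwappable G := by
  intro e he
  by_cases hex : ∃ x ∈ G.edgeSet, x ≠ e
  · obtain ⟨x, hx, hxe⟩ := hex
    rcases pair_step h he hx hxe with hswap | ⟨Ψ₁, β₁, b₁, himg₁, -, hβ₁E, hβ₁e, hb₁, hb₁nd⟩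
    · exact hswap
    rcases pair_step h he hβ₁E hβ₁e with hswap | ⟨Ψ₂, β₂, b₂, himg₂, hmap₂, hβ₂E, hβ₂e, hb₂, hb₂nd⟩
    · exact hswap
    set σ₁ := sym2Equiv Ψ₁ with hσ₁
    set σ₂ := sym2Equiv Ψ₂ with hσ₂
    set E := G.edgeSet with hEdef
    set D := σ₂ '' (insert b₁ (E \ {β₁})) with hD
    have hDeq : D = insert (σ₂ b₁) ((insert b₂ (E \ {β₂})) \ {e}) := by
      rw [hD, Set.image_insert_eq, Set.image_diff σ₂.injective, Set.image_singleton,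
        himg₂, hmap₂]
    have hσ₂b₁e : σ₂ b₁ ≠ e := by
      rw [← hmap₂]
      intro hcontra
      exact hb₁ (σ₂.injective hcontra ▸ hβ₁E)
    have heD : e ∉ D := by
      rw [hDeq]
      rintro (hc | hc)
      · exact hσ₂b₁e hc.symm
      · exact hc.2 rfl
    have hnd1 : ∀ z ∈ insert b₁ (E \ {β₁}), ¬z.IsDiag := by
      rintro z (rfl | hz)
      · exact hb₁nd
      · exact G.not_isDiag_of_mem_edgeSet hz.1
    have hnd : ∀ z ∈ D, ¬z.IsDiag := by
      rintro z ⟨w, hw, rfl⟩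
      rw [hσ₂, sym2Equiv_isDiag]
      exact hnd1 w hw
    have hsub : E \ D ⊆ {e, β₂} := by
      rintro z ⟨hzE, hzD⟩
      by_contra hcon
      simp only [Set.mem_insert_iff, Set.mem_singleton_iff, not_or] at hcon
      refine hzD ?_
      rw [hDeq]
      exact Or.inr ⟨Or.inr ⟨hzE, hcon.2⟩, hcon.1⟩
    have hfe1 : (SimpleGraph.fromEdgeSet (insert b₁ (E \ {β₁}))).edgeSet
        = insert b₁ (E \ {β₁}) := by
      rw [SimpleGraph.edgeSet_fromEdgeSet]
      ext z
      exact ⟨fun hz => hz.1, fun hz => ⟨hz, hnd1 z hz⟩⟩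
    have hfeD : (SimpleGraph.fromEdgeSet D).edgeSet = D := by
      rw [SimpleGraph.edgeSet_fromEdgeSet]
      ext z
      exact ⟨fun hz => hz.1, fun hz => ⟨hz, hnd z hz⟩⟩
    have hiso : Nonempty (SimpleGraph.fromEdgeSet D ≃g G) := by
      have iso_a : G ≃g SimpleGraph.fromEdgeSet (insert b₁ (E \ {β₁})) :=
        isoOfMapEdgeSet G _ Ψ₁ (by rw [hfe1]; exact himg₁)
      have iso_b : SimpleGraph.fromEdgeSet (insert b₁ (E \ {β₁}))
          ≃g SimpleGraph.fromEdgeSet D :=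
        isoOfMapEdgeSet _ _ Ψ₂ (by rw [hfe1, hfeD, hD])
      exact ⟨(iso_a.trans iso_b).symm⟩
    exact swap_builder he hnd heD hsub hiso
  · -- `e` is the only edge of `G`; derive a contradiction from the hypothesis
    exfalso
    push_neg at hex
    have hE : G.edgeSet = {e} := Set.eq_singleton_iff_unique_mem.2 ⟨he, hex⟩
    have hS : (G.deleteEdges {e} ::ₘ 0) ≤ edgeDeck G := by
      refine Multiset.singleton_le.2 ?_
      exact Multiset.mem_map_of_mem _ (Finset.mem_def.1 (SimpleGraph.mem_edgeFinset.2 he))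
    obtain ⟨H, hni, T, hT, hrel⟩ := h _ hS (by simp)
    obtain ⟨f, hf, ⟨φ⟩⟩ := deck_single_unpack T hT hrel
    obtain ⟨π, hbπ, himg⟩ := pullback_blocker he hf φ hni
    have h0 : G.edgeSet \ {e} = (∅ : Set (Sym2 V)) := by rw [hE]; simp
    have hHE : H.edgeSet \ {f} = (∅ : Set (Sym2 V)) := by rw [← himg, h0]; simp
    have hHf : H.edgeSet = {f} := by
      apply Set.eq_of_subset_of_subset
      · intro z hz
        by_contra hc
        exact absurd (Set.mem_diff z |>.2 ⟨hz, hc⟩) (by rw [hHE]; simp)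
      · intro z hz
        rw [Set.mem_singleton_iff] at hz
        rw [hz]; exact hf
    obtain ⟨π', hπ'⟩ := exists_equiv_sym2 f e (H.not_isDiag_of_mem_edgeSet hf)
      (G.not_isDiag_of_mem_edgeSet he)
    exact hni ⟨isoOfMapEdgeSet H G π' (by rw [hHf, hE, Set.image_singleton, hπ'])⟩
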